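/- For positive reals α, β and integer n ≥ 1, ∑_{j=1}^{n} C(n,j)·Beta(j+β-1, n-j+α) = ∑_{k=0}^{n-1} Beta(α+k, β). -/

import Mathlib

open Finset

noncomputable def Beta (x y : ℝ) : ℝ := Real.Gamma x * Real.Gamma y / Real.Gamma (x + y)

lemma Beta_comm (x y : ℝ) : Beta x y = Beta y x := by
  unfold Beta; rw [add_comm, mul_comm]

lemma Beta_rec (x y : ℝ) (hx : 0 < x) (hy : 0 < y) :
    Beta x y = Beta (x + 1) y + Beta x (y + 1) := by
  unfold Beta
  have hxy : (0 : ℝ) < x + y := by linarith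
  rw [Real.Gamma_add_one hx.ne', Real.Gamma_add_one hy.ne',
    show x + 1 + y = (x + y) + 1 by ring, show x + (y + 1) = (x + y) + 1 by ring,
    Real.Gamma_add_one hxy.ne']
  have h := (Real.Gamma_pos_of_pos hxy).ne'
  field_simp

lemma beta_key (α β : ℝ) (hα : 0 < α) (hβ : 0 < β) (n : ℕ) :
    ∑ i ∈ Finset.range n, (n.choose (i + 1) : ℝ) *
        Beta ((i : ℝ) + β) ((n : ℝ) - (i : ℝ) - 1 + α) =
      ∑ k ∈ Finset.range n, Beta (α + (k : ℝ)) β := by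
  induction n with
  | zero => simp
  | succ n ih =>
    have cast1 : ∀ i : ℕ, ((n + 1 : ℕ) : ℝ) - (i : ℝ) - 1 + α = (n : ℝ) - i + α := by
      intro i; push_cast; ring
    calc
      ∑ i ∈ Finset.range (n + 1), ((n + 1).choose (i + 1) : ℝ) *
          Beta ((i : ℝ) + β) (((n : ℕ) + 1 : ℕ) - (i : ℝ) - 1 + α)
        = ∑ i ∈ Finset.range (n + 1), ((n.choose i : ℝ) *
              Beta ((i : ℝ) + β) ((n : ℝ) - i + α) +
            (n.choose (i + 1) : ℝ) * Beta ((i : ℝ) + β) ((n : ℝ) - i + α)) := by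
          refine Finset.sum_congr rfl fun i _ => ?_
          rw [Nat.choose_succ_succ, cast1 i]
          push_cast
          ring
      _ = (∑ i ∈ Finset.range (n + 1), (n.choose i : ℝ) *
              Beta ((i : ℝ) + β) ((n : ℝ) - i + α)) +
            ∑ i ∈ Finset.range (n + 1), (n.choose (i + 1) : ℝ) *
              Beta ((i : ℝ) + β) ((n : ℝ) - i + α) := by
          rw [Finset.sum_add_distrib]
      _ = (Beta β ((n : ℝ) + α) + ∑ i ∈ Finset.range n, (n.choose (i + 1) : ℝ) *
              Beta (((i : ℝ) + β) + 1) ((n : ℝ) - i - 1 + α)) +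
            ∑ i ∈ Finset.range n, (n.choose (i + 1) : ℝ) *
              Beta ((i : ℝ) + β) (((n : ℝ) - i - 1 + α) + 1) := by
          have e1 : ∑ i ∈ Finset.range (n + 1), (n.choose i : ℝ) *
              Beta ((i : ℝ) + β) ((n : ℝ) - i + α)
              = Beta β ((n : ℝ) + α) + ∑ i ∈ Finset.range n, (n.choose (i + 1) : ℝ) *
                Beta (((i : ℝ) + β) + 1) ((n : ℝ) - i - 1 + α) := by
            rw [Finset.sum_range_succ' (fun i => (n.choose i : ℝ) *
              Beta ((i : ℝ) + β) ((n : ℝ) - i + α)), add_comm]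
            congr 1
            · norm_num
            · refine Finset.sum_congr rfl fun i _ => ?_
              congr 2 <;> push_cast <;> ring
          have e2 : ∑ i ∈ Finset.range (n + 1), (n.choose (i + 1) : ℝ) *
              Beta ((i : ℝ) + β) ((n : ℝ) - i + α)
              = ∑ i ∈ Finset.range n, (n.choose (i + 1) : ℝ) *
                Beta ((i : ℝ) + β) (((n : ℝ) - i - 1 + α) + 1) := by
            rw [Finset.sum_range_succ]
            simp only [Nat.choose_succ_self, Nat.cast_zero, zero_mul, add_zero]
            refine Finset.sum_congr rfl fun i _ => ?_
            congr 2 <;> push_cast <;> ring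
          rw [e1, e2]
      _ = Beta β ((n : ℝ) + α) + ∑ i ∈ Finset.range n, (n.choose (i + 1) : ℝ) *
              Beta ((i : ℝ) + β) ((n : ℝ) - i - 1 + α) := by
          rw [add_assoc, ← Finset.sum_add_distrib]
          congr 1
          refine Finset.sum_congr rfl fun i hi => ?_
          have hi' : (i : ℝ) ≤ (n : ℝ) - 1 := by
            have := Finset.mem_range.mp hi
            have : (i : ℝ) + 1 ≤ (n : ℝ) := by exact_mod_cast this
            linarith
          rw [← mul_add, ← Beta_rec ((i : ℝ) + β) ((n : ℝ) - i - 1 + α)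
            (by positivity) (by linarith)]
      _ = ∑ k ∈ Finset.range (n + 1), Beta (α + (k : ℝ)) β := by
          rw [Finset.sum_range_succ, ih, Beta_comm, add_comm]
          congr 2
          ring

theorem beta_sum_identity
    (α β : ℝ) (hα : 0 < α) (hβ : 0 < β) (n : ℕ) (hn : 1 ≤ n) :
    ∑ j ∈ Finset.Icc 1 n, (n.choose j : ℝ) * Beta ((j : ℝ) + β - 1) ((n : ℝ) - (j : ℝ) + α) =
      ∑ k ∈ Finset.range n, Beta (α + (k : ℝ)) β := by
  rw [← beta_key α β hα hβ n]
  rw [show Finset.Icc 1 n = Finset.Ico 1 (n + 1) from (Finset.Ico_add_one_right_eq_Icc 1 n).symm,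
    Finset.sum_Ico_eq_sum_range]
  simp only [Nat.add_sub_cancel]
  refine Finset.sum_congr rfl fun i _ => ?_
  congr 2 <;> push_cast <;> ring
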